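/- Let X and Y be completely metrizable spaces, A ⊆ X, B ⊆ Y, and f : A → B a homeomorphism. Then there exist G_δ sets S ⊆ X and T ⊆ Y with A ⊆ S, B ⊆ T, and a homeomorphism g : S → T extending f. -/

import Mathlib

open Set Filter Topology EMetric ENNReal

lemma kuratowski_extension {X Y : Type*} [MetricSpace X] [MetricSpace Y] [CompleteSpace Y]
    (A : Set X) (φ : X → Y) (hφ : ContinuousOn φ A) :
    ∃ S : Set X, IsGδ S ∧ A ⊆ S ∧ ∃ g : X → Y, ContinuousOn g S ∧ Set.EqOn g φ A := by
  set U : ℕ → Set X := fun n =>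
    {x | ∃ V, IsOpen V ∧ x ∈ V ∧ EMetric.diam (φ '' (V ∩ A)) ≤ ((n : ℝ≥0∞) + 1)⁻¹} with hUdef
  have hU : ∀ n, IsOpen (U n) := by
    intro n
    rw [isOpen_iff_forall_mem_open]
    rintro x ⟨V, hV, hxV, hd⟩
    exact ⟨V, fun y hy => ⟨V, hV, hy, hd⟩, hV, hxV⟩
  set S : Set X := closure A ∩ ⋂ n, U n with hSdef
  have hAS : A ⊆ S := by
    intro a ha
    refine ⟨subset_closure ha, mem_iInter.2 fun n => ?_⟩
    have hpos : (0 : ℝ≥0∞) < ((n : ℝ≥0∞) + 1)⁻¹ / 2 := by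
      apply ENNReal.div_pos
      · simp [ENNReal.inv_ne_zero]
      · exact ofNat_ne_top
    have hball : φ ⁻¹' (EMetric.ball (φ a) (((n : ℝ≥0∞) + 1)⁻¹ / 2)) ∈ 𝓝[A] a :=
      (hφ a ha) (EMetric.ball_mem_nhds _ hpos)
    rcases mem_nhdsWithin.1 hball with ⟨V, hV, haV, hVA⟩
    refine ⟨V, hV, haV, ?_⟩
    calc EMetric.diam (φ '' (V ∩ A)) ≤ EMetric.diam (EMetric.ball (φ a) (((n : ℝ≥0∞) + 1)⁻¹ / 2)) :=
          EMetric.diam_mono (by rintro _ ⟨x, hx, rfl⟩; exact hVA hx)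
      _ ≤ 2 * (((n : ℝ≥0∞) + 1)⁻¹ / 2) := EMetric.diam_ball
      _ = ((n : ℝ≥0∞) + 1)⁻¹ := ENNReal.mul_div_cancel two_ne_zero ofNat_ne_top
  have hlim : ∀ x ∈ S, ∃ y, Tendsto φ (𝓝[A] x) (𝓝 y) := by
    rintro x ⟨hxc, hxU⟩
    haveI : (𝓝[A] x).NeBot := mem_closure_iff_nhdsWithin_neBot.1 hxc
    have hc : Cauchy (Filter.map φ (𝓝[A] x)) := by
      rw [EMetric.cauchy_iff]
      refine ⟨Filter.map_neBot.ne, fun ε hε => ?_⟩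
      obtain ⟨n, hn⟩ := ENNReal.exists_inv_nat_lt hε.ne'
      rcases mem_iInter.1 hxU n with ⟨V, hV, hxV, hd⟩
      refine ⟨φ '' (V ∩ A), Filter.image_mem_map (mem_nhdsWithin.2 ⟨V, hV, hxV, subset_rfl⟩),
        fun u hu v hv => ?_⟩
      calc edist u v ≤ EMetric.diam (φ '' (V ∩ A)) := EMetric.edist_le_diam_of_mem hu hv
        _ ≤ ((n : ℝ≥0∞) + 1)⁻¹ := hd
        _ ≤ (n : ℝ≥0∞)⁻¹ := by gcongr; exact le_add_of_nonneg_right zero_le_one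
        _ < ε := hn
    obtain ⟨y, hy⟩ := CompleteSpace.complete hc
    exact ⟨y, hy⟩
  refine ⟨S, (isClosed_closure.isGδ).inter (IsGδ.iInter fun n => (hU n).isGδ),
    hAS, extendFrom A φ, continuousOn_extendFrom inter_subset_left hlim,
    fun a ha => extendFrom_extends hφ a ha⟩

/-- A `Gδ` set intersected with the preimage of a `Gδ` set under a map continuous on it
is `Gδ`. -/
lemma isGδ_inter_preimage {X Y : Type*} [MetricSpace X] [MetricSpace Y]
    {P : Set X} (hP : IsGδ P) {T : Set Y} (hT : IsGδ T) {g : X → Y}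
    (hg : ContinuousOn g P) : IsGδ (P ∩ g ⁻¹' T) := by
  obtain ⟨W, hWopen, rfl⟩ := isGδ_iff_eq_iInter_nat.1 hT
  have key : ∀ n : ℕ, ∃ u : Set X, IsOpen u ∧ g ⁻¹' (W n) ∩ P = u ∩ P := fun n =>
    continuousOn_iff'.1 hg (W n) (hWopen n)
  choose u hu hequ using key
  have : P ∩ g ⁻¹' (⋂ n, W n) = ⋂ n, P ∩ u n := by
    ext x
    simp only [mem_inter_iff, mem_preimage, mem_iInter]
    constructor
    · rintro ⟨hxP, hxW⟩ n
      have : x ∈ u n ∩ P := (hequ n) ▸ (⟨hxW n, hxP⟩ : x ∈ g ⁻¹' (W n) ∩ P)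
      exact ⟨hxP, this.1⟩
    · intro h
      have hxP := (h 0).1
      refine ⟨hxP, fun n => ?_⟩
      have : x ∈ g ⁻¹' (W n) ∩ P := (hequ n) ▸ (⟨(h n).2, hxP⟩ : x ∈ u n ∩ P)
      exact this.1
  rw [this]
  exact IsGδ.iInter fun n => hP.inter (hu n).isGδ

/-- The equalizer of a continuous self-map with the identity, inside a `Gδ` set, is `Gδ`. -/
lemma isGδ_equalizer {X : Type*} [MetricSpace X] {P : Set X} (hP : IsGδ P) {h : X → X}
    (hh : ContinuousOn h P) : IsGδ {x | x ∈ P ∧ h x = x} := by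
  have hcl : IsClosed {x : P | h ↑x = ↑x} :=
    isClosed_eq (hh.restrict) continuous_subtype_val
  obtain ⟨C, hC, hCeq⟩ := isClosed_induced_iff.1 hcl
  have : {x | x ∈ P ∧ h x = x} = P ∩ C := by
    ext x
    constructor
    · rintro ⟨hxP, hxE⟩
      refine ⟨hxP, ?_⟩
      have : (⟨x, hxP⟩ : P) ∈ Subtype.val ⁻¹' C := hCeq ▸ hxE
      exact this
    · rintro ⟨hxP, hxC⟩
      have : (⟨x, hxP⟩ : P) ∈ {x : P | h ↑x = ↑x} := hCeq ▸ hxC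
      exact ⟨hxP, this⟩
  rw [this]
  exact hP.inter hC.isGδ

/-- Lavrentieff's homeomorphism extension theorem: a homeomorphism between
`A ⊆ X` and `B ⊆ Y` (with `X`, `Y` completely metrizable) extends to a
homeomorphism between `G_δ` sets `S ⊇ A` and `T ⊇ B`. -/
theorem lavrentieff_homeomorphism {X Y : Type*}
    [MetricSpace X] [CompleteSpace X] [MetricSpace Y] [CompleteSpace Y]
    (A : Set X) (B : Set Y) (f : A ≃ₜ B) :
    ∃ (S : Set X) (T : Set Y), IsGδ S ∧ IsGδ T ∧
      ∃ (hAS : A ⊆ S) (_hBT : B ⊆ T) (g : S ≃ₜ T),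
        ∀ a : A, ((g ⟨a.1, hAS a.2⟩ : T) : Y) = ((f a : B) : Y) := by
  classical
  rcases A.eq_empty_or_nonempty with rfl | ⟨a₀, ha₀⟩
  · -- A empty, hence B empty
    haveI : IsEmpty (∅ : Set X) := by simp
    haveI hBempty : IsEmpty B := Function.isEmpty f.symm
    have hB : B = ∅ := by
      rcases B.eq_empty_or_nonempty with h | ⟨b, hb⟩
      · exact h
      · exact absurd ⟨b, hb⟩ (not_nonempty_iff.2 hBempty)
    subst hB
    haveI : IsEmpty (∅ : Set Y) := by simp
    refine ⟨∅, ∅, IsGδ.empty, IsGδ.empty, subset_rfl, subset_rfl,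
      ⟨Equiv.equivOfIsEmpty _ _,
        continuous_iff_continuousAt.2 fun x => isEmptyElim x,
        continuous_iff_continuousAt.2 fun y => isEmptyElim y⟩,
      fun a => isEmptyElim a⟩
  · haveI : Nonempty Y := ⟨(f ⟨a₀, ha₀⟩ : B)⟩
    haveI : Nonempty X := ⟨a₀⟩
    -- global representatives of f and f.symm
    set φ : X → Y := fun x => if h : x ∈ A then (f ⟨x, h⟩ : B) else Classical.arbitrary Y with hφdef
    set ψ : Y → X := fun y => if h : y ∈ B then (f.symm ⟨y, h⟩ : A) else Classical.arbitrary X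
      with hψdef
    have hφA : ∀ a (ha : a ∈ A), φ a = (f ⟨a, ha⟩ : B) := fun a ha => by simp only [hφdef]; exact dif_pos ha
    have hψB : ∀ b (hb : b ∈ B), ψ b = (f.symm ⟨b, hb⟩ : A) := fun b hb => by simp only [hψdef]; exact dif_pos hb
    have hφcont : ContinuousOn φ A := by
      rw [continuousOn_iff_continuous_restrict]
      have : A.domRestrict φ = fun a => (f a : Y) := by
        funext a; exact hφA a a.2
      rw [this]
      exact continuous_subtype_val.comp f.continuous
    have hψcont : ContinuousOn ψ B := by
      rw [continuousOn_iff_continuous_restrict]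
      have : B.domRestrict ψ = fun b => (f.symm b : X) := by
        funext b; exact hψB b b.2
      rw [this]
      exact continuous_subtype_val.comp f.symm.continuous
    obtain ⟨S₁, hS₁Gδ, hAS₁, g₁, hg₁cont, hg₁eq⟩ := kuratowski_extension A φ hφcont
    obtain ⟨T₁, hT₁Gδ, hBT₁, g₂, hg₂cont, hg₂eq⟩ := kuratowski_extension B ψ hψcont
    -- values of g₁, g₂ on A, B
    have hg₁A : ∀ a (ha : a ∈ A), g₁ a = (f ⟨a, ha⟩ : B) := fun a ha => (hg₁eq ha).trans (hφA a ha)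
    have hg₂B : ∀ b (hb : b ∈ B), g₂ b = (f.symm ⟨b, hb⟩ : A) :=
      fun b hb => (hg₂eq hb).trans (hψB b hb)
    set P : Set X := S₁ ∩ g₁ ⁻¹' T₁ with hPdef
    set Q : Set Y := T₁ ∩ g₂ ⁻¹' S₁ with hQdef
    have hPGδ : IsGδ P := isGδ_inter_preimage hS₁Gδ hT₁Gδ hg₁cont
    have hQGδ : IsGδ Q := isGδ_inter_preimage hT₁Gδ hS₁Gδ hg₂cont
    set S : Set X := {x | x ∈ P ∧ g₂ (g₁ x) = x} with hSdef
    set T : Set Y := {y | y ∈ Q ∧ g₁ (g₂ y) = y} with hTdef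
    have hScomp : ContinuousOn (g₂ ∘ g₁) P :=
      hg₂cont.comp (hg₁cont.mono inter_subset_left) (fun x hx => hx.2)
    have hTcomp : ContinuousOn (g₁ ∘ g₂) Q :=
      hg₁cont.comp (hg₂cont.mono inter_subset_left) (fun y hy => hy.2)
    have hSGδ : IsGδ S := isGδ_equalizer hPGδ hScomp
    have hTGδ : IsGδ T := isGδ_equalizer hQGδ hTcomp
    have hAS : A ⊆ S := by
      intro a ha
      have h1 : g₁ a ∈ T₁ := by
        rw [hg₁A a ha]; exact hBT₁ (f ⟨a, ha⟩).2
      refine ⟨⟨hAS₁ ha, h1⟩, ?_⟩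
      rw [hg₁A a ha, hg₂B _ (f ⟨a, ha⟩).2]
      simp
    have hBT : B ⊆ T := by
      intro b hb
      have h1 : g₂ b ∈ S₁ := by
        rw [hg₂B b hb]; exact hAS₁ (f.symm ⟨b, hb⟩).2
      refine ⟨⟨hBT₁ hb, h1⟩, ?_⟩
      rw [hg₂B b hb, hg₁A _ (f.symm ⟨b, hb⟩).2]
      simp
    have hmapsST : ∀ x ∈ S, g₁ x ∈ T := by
      rintro x ⟨⟨hxS₁, hxT₁⟩, hxe⟩
      refine ⟨⟨hxT₁, ?_⟩, ?_⟩
      · show g₂ (g₁ x) ∈ S₁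
        rw [hxe]; exact hxS₁
      · show g₁ (g₂ (g₁ x)) = g₁ x
        rw [hxe]
    have hmapsTS : ∀ y ∈ T, g₂ y ∈ S := by
      rintro y ⟨⟨hyT₁, hyS₁⟩, hye⟩
      refine ⟨⟨hyS₁, ?_⟩, ?_⟩
      · show g₁ (g₂ y) ∈ T₁
        rw [hye]; exact hyT₁
      · show g₂ (g₁ (g₂ y)) = g₂ y
        rw [hye]
    have hSsubS₁ : S ⊆ S₁ := fun x hx => hx.1.1
    have hTsubT₁ : T ⊆ T₁ := fun y hy => hy.1.1
    refine ⟨S, T, hSGδ, hTGδ, hAS, hBT,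
      ⟨⟨fun x => ⟨g₁ x, hmapsST x x.2⟩, fun y => ⟨g₂ y, hmapsTS y y.2⟩,
        fun x => Subtype.ext x.2.2, fun y => Subtype.ext y.2.2⟩,
        Continuous.subtype_mk ((hg₁cont.mono hSsubS₁).restrict) _,
        Continuous.subtype_mk ((hg₂cont.mono hTsubT₁).restrict) _⟩,
      fun a => ?_⟩
    exact hg₁A a.1 a.2
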